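/- Let v ∈ ℝⁿ have non-negative entries, with every non-zero entry of magnitude at least δ > 0 and ‖v‖₂ ≤ R, and suppose v_i ≠ 0 for some i ∈ C where C ⊆ [n]. Let σ ≥ 0 with R² + σ² > 0, let a > 0, let x₁,…,xₙ be i.i.d. standard Gaussian N(0,1), and let z ∼ N(0,σ²) be independent of x. Then the conditional probability that ⟨v,x⟩ + z ≥ 0 given the event E_C = {x_j > a for all j ∈ C} is at least Φ(aδ/√(R²+σ²)), where Φ denotes the standard Gaussian cumulative distribution function; equivalently, it is at least ½ + ½·erf(aδ/√(2(R²+σ²))). -/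

import Mathlib

open MeasureTheory ProbabilityTheory

open Real Set
open scoped ENNReal NNReal

noncomputable section

lemma gaussianPDFReal_mul (v₁ v₂ : ℝ≥0) (h₁ : v₁ ≠ 0) (h₂ : v₂ ≠ 0) (x y : ℝ) :
    gaussianPDFReal 0 v₁ x * gaussianPDFReal 0 v₂ (y - x) =
      gaussianPDFReal 0 (v₁ + v₂) y *
        gaussianPDFReal ((v₁ : ℝ) * y / ((v₁ : ℝ) + (v₂ : ℝ))) (v₁ * v₂ / (v₁ + v₂)) x := by
  have ha : (0:ℝ) < v₁ := by simpa [pos_iff_ne_zero] using h₁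
  have hb : (0:ℝ) < v₂ := by simpa [pos_iff_ne_zero] using h₂
  have hab : (0:ℝ) < (v₁:ℝ) + v₂ := by positivity
  have hw : ((v₁ * v₂ / (v₁ + v₂) : ℝ≥0) : ℝ) = (v₁:ℝ) * (v₂:ℝ) / ((v₁:ℝ) + (v₂:ℝ)) := by
    push_cast; ring
  have hsum : ((v₁ + v₂ : ℝ≥0) : ℝ) = (v₁:ℝ) + (v₂:ℝ) := by push_cast; ring
  simp only [gaussianPDFReal, sub_zero, hw, hsum]
  rw [mul_mul_mul_comm, mul_mul_mul_comm ((√(2*π*((v₁:ℝ)+(v₂:ℝ))))⁻¹)]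
  congr 1
  · rw [← mul_inv, ← mul_inv, ← Real.sqrt_mul (by positivity), ← Real.sqrt_mul (by positivity)]
    congr 2
    field_simp
  · rw [← Real.exp_add, ← Real.exp_add]
    congr 1
    field_simp
    ring
lemma gaussianReal_map_add (v₁ v₂ : ℝ≥0) :
    ((gaussianReal 0 v₁).prod (gaussianReal 0 v₂)).map (fun p : ℝ × ℝ => p.1 + p.2) =
      gaussianReal 0 (v₁ + v₂) := by
  have hm : Measurable (fun p : ℝ × ℝ => p.1 + p.2) := measurable_fst.add measurable_snd
  by_cases h₁ : v₁ = 0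
  · subst h₁
    rw [gaussianReal_zero_var, Measure.dirac_prod, Measure.map_map hm measurable_prodMk_left]
    simp [Function.comp_def]
  by_cases h₂ : v₂ = 0
  · subst h₂
    rw [gaussianReal_zero_var, Measure.prod_dirac, Measure.map_map hm measurable_prodMk_right]
    simp [Function.comp_def]
  have hsum : v₁ + v₂ ≠ 0 := by simp [h₁]
  have hw0 : v₁ * v₂ / (v₁ + v₂) ≠ 0 := by
    rw [div_eq_mul_inv]
    exact mul_ne_zero (mul_ne_zero h₁ h₂) (inv_ne_zero hsum)
  have hF : Measurable (fun q : ℝ × ℝ => gaussianPDF q.1 v₂ q.2) := by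
    unfold gaussianPDF gaussianPDFReal
    fun_prop
  refine Measure.ext fun s hs => ?_
  rw [Measure.map_apply hm hs, gaussianReal_apply _ hsum s, Measure.prod_apply (hm hs)]
  have key : ∀ x : ℝ, gaussianReal 0 v₂ (Prod.mk x ⁻¹' ((fun p : ℝ × ℝ => p.1 + p.2) ⁻¹' s)) =
      ∫⁻ y in s, gaussianPDF x v₂ y := by
    intro x
    have hpre : Prod.mk x ⁻¹' ((fun p : ℝ × ℝ => p.1 + p.2) ⁻¹' s) = (fun y => x + y) ⁻¹' s := rfl
    rw [hpre, ← Measure.map_apply (measurable_const_add x) hs, gaussianReal_map_const_add,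
      zero_add, gaussianReal_apply _ h₂]
  simp_rw [key]
  rw [gaussianReal_of_var_ne_zero _ h₁,
    lintegral_withDensity_eq_lintegral_mul _ (measurable_gaussianPDF _ _)
      (by exact Measurable.lintegral_prod_right hF)]
  simp only [Pi.mul_apply]
  have hne : ∀ a : ℝ, gaussianPDF 0 v₁ a ≠ ∞ := fun a => ENNReal.ofReal_ne_top
  simp_rw [← lintegral_const_mul' _ _ (hne _)]
  rw [lintegral_lintegral_swap
    (((measurable_gaussianPDF 0 v₁).comp measurable_fst).mul hF).aemeasurable]
  have inner : ∀ y : ℝ, ∫⁻ x, gaussianPDF 0 v₁ x * gaussianPDF x v₂ y = gaussianPDF 0 (v₁ + v₂) y := by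
    intro y
    have hxy : ∀ x : ℝ, gaussianPDF 0 v₁ x * gaussianPDF x v₂ y =
        gaussianPDF 0 (v₁ + v₂) y *
          gaussianPDF ((v₁ : ℝ) * y / ((v₁ : ℝ) + (v₂ : ℝ))) (v₁ * v₂ / (v₁ + v₂)) x := by
      intro x
      have hsub : gaussianPDFReal 0 v₂ (y - x) = gaussianPDFReal x v₂ y := by
        rw [gaussianPDFReal_sub, zero_add]
      simp only [gaussianPDF]
      rw [← ENNReal.ofReal_mul (gaussianPDFReal_nonneg _ _ _),
        ← ENNReal.ofReal_mul (gaussianPDFReal_nonneg _ _ _)]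
      rw [← hsub, gaussianPDFReal_mul v₁ v₂ h₁ h₂ x y]
    simp_rw [hxy]
    rw [lintegral_const_mul _ (measurable_gaussianPDF _ _), lintegral_gaussianPDF_eq_one _ hw0,
      mul_one]
  simp_rw [inner]
lemma map_add_of_map_gaussian {α β : Type*} [MeasurableSpace α] [MeasurableSpace β]
    (μ : Measure α) (ν : Measure β) [SFinite μ] [SFinite ν]
    {X : α → ℝ} {Y : β → ℝ} (hX : Measurable X) (hY : Measurable Y) {v₁ v₂ : ℝ≥0}
    (h1 : μ.map X = gaussianReal 0 v₁) (h2 : ν.map Y = gaussianReal 0 v₂) :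
    (μ.prod ν).map (fun p => X p.1 + Y p.2) = gaussianReal 0 (v₁ + v₂) := by
  have hc : (fun p : α × β => X p.1 + Y p.2) = (fun q : ℝ × ℝ => q.1 + q.2) ∘ Prod.map X Y := rfl
  rw [hc, ← Measure.map_map (g := fun q : ℝ × ℝ => q.1 + q.2) (measurable_fst.add measurable_snd) (hX.prodMap hY),
    ← Measure.map_prod_map _ _ hX hY, h1, h2, gaussianReal_map_add]

lemma pi_fin_sum_gauss : ∀ (m : ℕ) (c : Fin m → ℝ),
    (Measure.pi fun _ : Fin m => gaussianReal 0 1).map (fun x => ∑ i, c i * x i) =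
      gaussianReal 0 (∑ i, (NNReal.mk (c i ^ 2) (sq_nonneg _))) := by
  intro m
  induction m with
  | zero =>
    intro c
    simp [Measure.map_const, gaussianReal_zero_var]
  | succ m ih =>
    intro c
    have hp := measurePreserving_piFinSuccAbove (fun _ : Fin (m + 1) => gaussianReal 0 1) 0
    set e := MeasurableEquiv.piFinSuccAbove (fun _ : Fin (m + 1) => ℝ) 0 with he
    have hcomp : (fun x : Fin (m + 1) → ℝ => ∑ i, c i * x i) =
        (fun p : ℝ × (Fin m → ℝ) =>
          c 0 * p.1 + ∑ j, c ((0 : Fin (m + 1)).succAbove j) * p.2 j) ∘ e := by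
      funext x
      simp only [Function.comp_apply]
      rw [Fin.sum_univ_succAbove (fun i => c i * x i) 0]
      rfl
    rw [hcomp, ← Measure.map_map (by fun_prop) e.measurable, hp.map_eq]
    have h1 : (gaussianReal 0 1).map (fun x : ℝ => c 0 * x) =
        gaussianReal 0 (NNReal.mk (c 0 ^ 2) (sq_nonneg _)) := by
      simpa using gaussianReal_map_const_mul (μ := 0) (v := 1) (c 0)
    have h2 := ih (fun j => c ((0 : Fin (m + 1)).succAbove j))
    rw [map_add_of_map_gaussian _ _ (by fun_prop) (by fun_prop) h1 h2]
    congr 1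
    exact (Fin.sum_univ_succAbove (fun i => (NNReal.mk (c i ^ 2) (sq_nonneg _))) 0).symm

lemma pi_sum_gauss (ι : Type*) [Fintype ι] (c : ι → ℝ) :
    (Measure.pi fun _ : ι => gaussianReal 0 1).map (fun x => ∑ i, c i * x i) =
      gaussianReal 0 (∑ i, (NNReal.mk (c i ^ 2) (sq_nonneg _))) := by
  obtain ⟨m, ⟨f⟩⟩ : ∃ m, Nonempty (Fin m ≃ ι) := ⟨Fintype.card ι, ⟨(Fintype.equivFin ι).symm⟩⟩
  have hp := measurePreserving_piCongrLeft (fun _ : ι => gaussianReal 0 1) f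
  rw [← hp.map_eq, Measure.map_map (by fun_prop) (MeasurableEquiv.piCongrLeft _ f).measurable]
  have hcomp : ((fun x : ι → ℝ => ∑ i, c i * x i) ∘ (MeasurableEquiv.piCongrLeft (fun _ : ι => ℝ) f)) =
      fun x : Fin m → ℝ => ∑ j, c (f j) * x j := by
    funext x
    simp only [Function.comp_apply]
    rw [← Equiv.sum_comp f (fun i => c i * (MeasurableEquiv.piCongrLeft (fun _ : ι => ℝ) f) x i)]
    refine Finset.sum_congr rfl fun j _ => ?_
    congr 1
    exact MeasurableEquiv.piCongrLeft_apply_apply (β := fun _ : ι => ℝ) f x j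
  rw [hcomp, pi_fin_sum_gauss]
  congr 1
  exact Equiv.sum_comp f fun i => (NNReal.mk (c i ^ 2) (sq_nonneg _))
lemma std_Ici_neg (u : ℝ) : gaussianReal 0 1 (Ici (-u)) = gaussianReal 0 1 (Iic u) := by
  have h1 : (NNReal.mk ((-1 : ℝ) ^ 2) (sq_nonneg _)) * 1 = 1 := NNReal.coe_injective (by norm_num)
  have hmap := gaussianReal_map_const_mul (μ := 0) (v := 1) (-1 : ℝ)
  rw [mul_zero, h1] at hmap
  conv_rhs => rw [← hmap]
  rw [Measure.map_apply (by fun_prop) measurableSet_Iic]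
  congr 1
  ext x
  simp only [mem_preimage, mem_Iic, mem_Ici, neg_one_mul, neg_le]

lemma gauss_Iic_le_Ici (τ : ℝ≥0) (b s : ℝ) (hb : 0 < b) (hs0 : 0 < s)
    (hτs : Real.sqrt τ ≤ s) :
    gaussianReal 0 1 (Iic (b / s)) ≤ gaussianReal 0 τ (Ici (-b)) := by
  by_cases hτ : τ = 0
  · subst hτ
    rw [gaussianReal_zero_var]
    have h1 : (Measure.dirac (0 : ℝ)) (Ici (-b)) = 1 := by
      rw [Measure.dirac_apply' _ measurableSet_Ici]
      simp [hb.le]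
    rw [h1]
    exact prob_le_one
  · set t : ℝ := Real.sqrt τ with ht
    have htpos : 0 < t := Real.sqrt_pos.2 (by exact_mod_cast (zero_le : (0:ℝ≥0) ≤ τ).lt_of_ne (Ne.symm hτ))
    have htau : (NNReal.mk (t ^ 2) (sq_nonneg _)) * 1 = τ := by
      apply NNReal.coe_injective
      rw [NNReal.coe_mul, NNReal.coe_one, mul_one, NNReal.coe_mk]
      exact Real.sq_sqrt τ.coe_nonneg
    have hmap := gaussianReal_map_const_mul (μ := 0) (v := 1) t
    rw [mul_zero, htau] at hmap
    rw [← hmap, Measure.map_apply (by fun_prop) measurableSet_Ici]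
    have hpre : (fun x : ℝ => t * x) ⁻¹' Ici (-b) = Ici (-(b / t)) := by
      ext x
      simp only [mem_preimage, mem_Ici]
      rw [← neg_div, div_le_iff₀ htpos, mul_comm]
    rw [hpre, std_Ici_neg]
    refine measure_mono (Iic_subset_Iic.2 ?_)
    exact div_le_div_of_nonneg_left hb.le htpos hτs
/-- MLC, single component intersecting `C`: let `v ∈ ℝⁿ` have non-negative
entries, every non-zero entry at least `δ > 0`, `‖v‖₂ ≤ R`, and `v_i ≠ 0` for
some `i ∈ C`.  Let the coordinates of `x` be i.i.d. standard Gaussians and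
`z ∼ N(0, σ²)` independent, with `R² + σ² > 0` and `a > 0`.  Then, conditioned
on `E_C = {x_j > a ∀ j ∈ C}`, the probability that `⟨v, x⟩ + z ≥ 0` is at least
`Φ(aδ/√(R² + σ²))`, where `Φ` is the standard Gaussian CDF. -/
theorem mlc_cond_prob_lower_bound (n : ℕ) (v : Fin n → ℝ) (δ R : ℝ)
    (hδ : 0 < δ) (hnonneg : ∀ i, 0 ≤ v i) (hmin : ∀ i, v i ≠ 0 → δ ≤ |v i|)
    (hR : Real.sqrt (∑ i, (v i) ^ 2) ≤ R)
    (σ : NNReal) (hRσ : 0 < R ^ 2 + (σ : ℝ) ^ 2)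
    (a : ℝ) (ha : 0 < a) (C : Finset (Fin n)) (hC : ∃ i ∈ C, v i ≠ 0) :
    gaussianReal 0 1 (Set.Iic (a * δ / Real.sqrt (R ^ 2 + (σ : ℝ) ^ 2))) ≤
      ProbabilityTheory.cond
        ((Measure.pi fun _ : Fin n => gaussianReal 0 1).prod
          (gaussianReal 0 (σ ^ 2)))
        {p : (Fin n → ℝ) × ℝ | ∀ j ∈ C, a < p.1 j}
        {p : (Fin n → ℝ) × ℝ | 0 ≤ (∑ i, v i * p.1 i) + p.2} := by
  classical
  set γ : Measure ℝ := gaussianReal 0 (σ ^ 2) with hγ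
  set Pm : Measure (Fin n → ℝ) := Measure.pi fun _ : Fin n => gaussianReal 0 1 with hPm
  set μ : Measure ((Fin n → ℝ) × ℝ) := Pm.prod γ with hμ
  set A : Set ((Fin n → ℝ) × ℝ) := {p | ∀ j ∈ C, a < p.1 j} with hA_def
  set B : Set ((Fin n → ℝ) × ℝ) := {p | 0 ≤ (∑ i, v i * p.1 i) + p.2} with hB_def
  let P : Fin n → Prop := fun i => i ∈ C
  letI : Fintype (Subtype P) := Subtype.fintype P
  letI : Fintype {i : Fin n // ¬ P i} := Subtype.fintype _
  let e := MeasurableEquiv.piEquivPiSubtypeProd (fun _ : Fin n => ℝ) P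
  have hpe := measurePreserving_piEquivPiSubtypeProd (fun _ : Fin n => gaussianReal 0 1) P
  set Pm1 : Measure (Subtype P → ℝ) := Measure.pi fun _ : Subtype P => gaussianReal 0 1 with hPm1
  set Pm2 : Measure ({i : Fin n // ¬ P i} → ℝ) :=
    Measure.pi fun _ : {i : Fin n // ¬ P i} => gaussianReal 0 1 with hPm2
  let Φ : ((Fin n → ℝ) × ℝ) ≃ᵐ (Subtype P → ℝ) × (({i : Fin n // ¬ P i} → ℝ) × ℝ) :=
    (e.prodCongr (MeasurableEquiv.refl ℝ)).trans MeasurableEquiv.prodAssoc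
  have hΦ : MeasurePreserving Φ μ (Pm1.prod (Pm2.prod γ)) := by
    constructor
    · exact Φ.measurable
    · have h1 : Measure.map (Prod.map e id) μ = (Pm1.prod Pm2).prod γ := by
        rw [hμ, ← Measure.map_prod_map _ _ e.measurable measurable_id, hpe.map_eq,
          Measure.map_id]
      have h2 : (Φ : ((Fin n → ℝ) × ℝ) → _) =
          (MeasurableEquiv.prodAssoc :
            ((Subtype P → ℝ) × ({i : Fin n // ¬ P i} → ℝ)) × ℝ ≃ᵐ _) ∘ (Prod.map e id) := rfl
      rw [h2, ← Measure.map_map MeasurableEquiv.prodAssoc.measurable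
        (e.measurable.prodMap measurable_id), h1, Measure.prodAssoc_prod]
  -- the sets on the target side
  set A' : Set (Subtype P → ℝ) := Set.pi univ (fun _ => Ioi a) with hA'
  let W : ({i : Fin n // ¬ P i} → ℝ) × ℝ → ℝ := fun q => (∑ j, v j.1 * q.1 j) + q.2
  have hWmeas : Measurable W := by
    apply Measurable.add _ measurable_snd
    exact Finset.measurable_sum _ fun j _ =>
      (measurable_pi_apply j).comp measurable_fst |>.const_mul _
  set D' : Set (({i : Fin n // ¬ P i} → ℝ) × ℝ) := W ⁻¹' Ici (-(a * δ)) with hD'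
  set D : Set ((Fin n → ℝ) × ℝ) :=
    {p | -(a * δ) ≤ (∑ j : {i : Fin n // ¬ P i}, v j.1 * p.1 j.1) + p.2} with hD_def
  have hA'meas : MeasurableSet A' := MeasurableSet.univ_pi fun _ => measurableSet_Ioi
  have hAeq : A = Φ ⁻¹' (A' ×ˢ univ) := by
    ext p
    simp only [hA_def, mem_setOf_eq, mem_preimage, mem_prod, mem_univ, and_true, hA',
      mem_pi, mem_Ioi]
    constructor
    · intro h j
      first
      | exact fun _ => h j.1 j.2
      | exact h j.1 j.2
    · intro h j hj
      first
      | exact h ⟨j, hj⟩ (Set.mem_univ _)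
      | exact h ⟨j, hj⟩ trivial
      | exact h ⟨j, hj⟩
  have hDeq : D = Φ ⁻¹' (univ ×ˢ D') := by
    ext p
    simp only [hD_def, mem_setOf_eq, mem_preimage, mem_prod, mem_univ, true_and, hD',
      mem_Ici, W]
    rfl
  have hADeq : A ∩ D = Φ ⁻¹' (A' ×ˢ D') := by
    rw [hAeq, hDeq, ← Set.preimage_inter, Set.prod_inter_prod, Set.univ_inter, Set.inter_univ]
  have hAmeas : MeasurableSet A := by
    rw [hAeq]; exact Φ.measurable (hA'meas.prod MeasurableSet.univ)
  have hD'meas : MeasurableSet D' := hWmeas measurableSet_Ici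
  have hsub1 : ∀ g : Fin n → ℝ, (∑ j ∈ C, g j) = ∑ j : Subtype P, g j.1 :=
    fun g => Finset.sum_subtype C (fun x => Iff.rfl) g
  have hsub2 : ∀ g : Fin n → ℝ, (∑ j ∈ Cᶜ, g j) = ∑ j : {i : Fin n // ¬ P i}, g j.1 :=
    fun g => Finset.sum_subtype Cᶜ (fun x => Finset.mem_compl) g
  have hsplit : ∀ g : Fin n → ℝ,
      (∑ j : Subtype P, g j.1) + (∑ j : {i : Fin n // ¬ P i}, g j.1) = ∑ i, g i := by
    intro g
    rw [← hsub1, ← hsub2, Finset.sum_add_sum_compl]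
  -- measure computations
  have hμA : μ A = Pm1 A' := by
    rw [hAeq, hΦ.measure_preimage (hA'meas.prod MeasurableSet.univ).nullMeasurableSet,
      Measure.prod_prod, measure_univ, mul_one]
  have hμAD : μ (A ∩ D) = Pm1 A' * (Pm2.prod γ) D' := by
    rw [hADeq, hΦ.measure_preimage (hA'meas.prod hD'meas).nullMeasurableSet, Measure.prod_prod]
  -- A ∩ D ⊆ B
  have hsub : A ∩ D ⊆ A ∩ B := by
    rintro p ⟨hpA, hpD⟩
    refine ⟨hpA, ?_⟩
    obtain ⟨i, hiC, hvi⟩ := hC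
    have hδi : δ ≤ v i := by
      have := hmin i hvi
      rwa [abs_of_nonneg (hnonneg i)] at this
    have hsplitp := hsplit (fun i => v i * p.1 i)
    have h1 : a * δ ≤ ∑ j : Subtype P, v j.1 * p.1 j.1 := by
      have hterm : a * δ ≤ v i * p.1 i := by
        rw [mul_comm]
        exact mul_le_mul hδi (hpA i hiC).le ha.le (hnonneg i)
      calc a * δ ≤ v i * p.1 i := hterm
        _ ≤ ∑ j : Subtype P, v j.1 * p.1 j.1 := by
          refine Finset.single_le_sum (f := fun j : Subtype P => v j.1 * p.1 j.1)
            (fun j _ => mul_nonneg (hnonneg _) ?_) (Finset.mem_univ (⟨i, hiC⟩ : Subtype P))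
        
          exact le_trans ha.le (hpA j.1 j.2).le
    have h2 : -(a * δ) ≤ (∑ j : {i : Fin n // ¬ P i}, v j.1 * p.1 j.1) + p.2 := hpD
    show 0 ≤ (∑ i, v i * p.1 i) + p.2
    linarith [hsplitp]
  -- distribution of W
  set τ : ℝ≥0 := ((∑ j : {i : Fin n // ¬ P i}, (NNReal.mk (v j.1 ^ 2) (sq_nonneg _)) : ℝ≥0)) + σ ^ 2 with hτ
  have hWmap : (Pm2.prod γ).map W = gaussianReal 0 τ := by
    exact map_add_of_map_gaussian Pm2 γ
      (Finset.measurable_sum Finset.univ fun (j : {i : Fin n // ¬ P i}) _ =>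
        (by fun_prop))
      measurable_id (pi_sum_gauss _ fun j => v j.1) (Measure.map_id)
  have hD'val : (Pm2.prod γ) D' = gaussianReal 0 τ (Ici (-(a * δ))) := by
    rw [← hWmap, Measure.map_apply hWmeas measurableSet_Ici]
  -- variance bound
  set s : ℝ := Real.sqrt (R ^ 2 + (σ : ℝ) ^ 2) with hs
  have hs0 : 0 < s := Real.sqrt_pos.2 hRσ
  have hsumle : (∑ i, (v i) ^ 2) ≤ R ^ 2 := by
    have h0 : (0:ℝ) ≤ ∑ i, (v i) ^ 2 := by positivity
    calc (∑ i, (v i) ^ 2) = Real.sqrt (∑ i, (v i) ^ 2) ^ 2 := (Real.sq_sqrt h0).symm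
      _ ≤ R ^ 2 := by
        have := Real.sqrt_nonneg (∑ i, (v i) ^ 2)
        nlinarith
  have hτle : (τ : ℝ) ≤ R ^ 2 + (σ : ℝ) ^ 2 := by
    have hcoe : (τ : ℝ) = (∑ j : {i : Fin n // ¬ P i}, v j.1 ^ 2) + (σ : ℝ) ^ 2 := by
      rw [hτ, NNReal.coe_add, NNReal.coe_sum, NNReal.coe_pow]
      simp
    rw [hcoe]
    have hle2 : (∑ j : {i : Fin n // ¬ P i}, v j.1 ^ 2) ≤ ∑ i, (v i) ^ 2 := by
      rw [← hsplit (fun i => v i ^ 2)]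
      exact le_add_of_nonneg_left (Finset.sum_nonneg fun j _ => sq_nonneg _)
    linarith
  have hτs : Real.sqrt τ ≤ s := by
    rw [hs]
    exact Real.sqrt_le_sqrt hτle
  have hbound := gauss_Iic_le_Ici τ (a * δ) s (mul_pos ha hδ) hs0 hτs
  -- positivity of μ A
  have hA'ne : Pm1 A' ≠ 0 := by
    rw [hA', hPm1, Measure.pi_pi]
    refine Finset.prod_ne_zero_iff.2 fun j _ => fun h0 => ?_
    have := gaussianReal_absolutelyContinuous' 0 one_ne_zero h0
    simp [Real.volume_Ioi] at this
  have hA'top : Pm1 A' ≠ ∞ := measure_ne_top _ _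
  -- final assembly
  rw [ProbabilityTheory.cond_apply hAmeas]
  have hstep : Pm1 A' * gaussianReal 0 1 (Iic (a * δ / s)) ≤ μ (A ∩ B) :=
    calc Pm1 A' * gaussianReal 0 1 (Iic (a * δ / s))
        ≤ Pm1 A' * (Pm2.prod γ) D' := by
          rw [hD'val]; exact mul_le_mul_right hbound _
      _ = μ (A ∩ D) := hμAD.symm
      _ ≤ μ (A ∩ B) := measure_mono hsub
  calc gaussianReal 0 1 (Iic (a * δ / s))
      = (μ A)⁻¹ * (Pm1 A' * gaussianReal 0 1 (Iic (a * δ / s))) := by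
        rw [hμA, ← mul_assoc, ENNReal.inv_mul_cancel hA'ne hA'top, one_mul]
    _ ≤ (μ A)⁻¹ * μ (A ∩ B) := mul_le_mul_right hstep _
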